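/- Let T be a set, 𝒜 a collection of subsets of T, and d a pseudometric on 𝒜. Let J : T → ℝ be a function, Π := {s ∈ T : J(s) ≠ 0}, L ⊆ T a subset, and δ > 0. For j ∈ ℕ define E_j := ⋃_{s ∈ Π ∩ L, 2^{-j} ≤ |J(s)| < 2^{-(j-1)}} {A ∈ 𝒜 : qd(s, A) < |J(s)|^δ}, and E := ⋂_{k∈ℕ} ⋃_{j ≥ k} E_j. If A ∈ E, then there exists a sequence (s_k)_{k∈ℕ} of points of Π ∩ L such that qd(s_k, A) → 0 and |J(s_k)| → 0 as k → ∞, and liminf_{k→∞} log |J(s_k)| / log(qd(s_k, A)) ≤ 1/δ (where qd(s_k,A) is interpreted as a real number, the logarithm of 0 taken as 0 and division by 0 as 0). -/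

import Mathlib

open Filter
open scoped ENNReal

/-- The victiny of `A` of size `ρ` : the union of the symmetric differences `A △ A'` over
`A' ∈ 𝒜` with `d A A' < ρ`; it is empty for `ρ ≤ 0`. -/
def victiny {T : Type*} (𝒜 : Set (Set T)) (d : Set T → Set T → ℝ)
    (A : Set T) (ρ : ℝ) : Set T :=
  {t | 0 < ρ ∧ ∃ A' ∈ 𝒜, d A A' < ρ ∧ t ∈ symmDiff A A'}

/-- The divergence `qd(t, A) := inf {ρ > 0 : t ∈ V(A, ρ)} ∈ [0, ∞]`,
with `inf ∅ = ∞`. -/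
noncomputable def qd {T : Type*} (𝒜 : Set (Set T)) (d : Set T → Set T → ℝ)
    (t : T) (A : Set T) : ℝ≥0∞ :=
  sInf (ENNReal.ofReal '' {ρ : ℝ | 0 < ρ ∧ t ∈ victiny 𝒜 d A ρ})

/-- **Jaffard-type bound from the limsup set `E = limsup_j E_j`:**
if `A ∈ E := ⋂ₖ ⋃_{j ≥ k} E_j` where
`E_j = ⋃_{s ∈ Π ∩ L, 2^{-j} ≤ |J(s)| < 2^{-(j-1)}} {A' ∈ 𝒜 : qd(s, A') < |J(s)|^δ}`,
then there is a sequence `(s_k)` of points of `Π ∩ L` with `qd(s_k, A) → 0`,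
`|J(s_k)| → 0`, and `liminf_k log |J(s_k)| / log (qd(s_k, A)) ≤ 1/δ`
(`Real.log 0 = 0` and `x / 0 = 0` by convention). -/
theorem stmt_16 {T : Type*} (𝒜 : Set (Set T)) (d : Set T → Set T → ℝ)
    (hnn : ∀ A ∈ 𝒜, ∀ B ∈ 𝒜, 0 ≤ d A B)
    (hsymm : ∀ A ∈ 𝒜, ∀ B ∈ 𝒜, d A B = d B A)
    (htri : ∀ A ∈ 𝒜, ∀ B ∈ 𝒜, ∀ C ∈ 𝒜, d A C ≤ d A B + d B C)
    (hrefl : ∀ A ∈ 𝒜, d A A = 0)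
    (J : T → ℝ) (L : Set T) (δ : ℝ) (hδ : 0 < δ) (A : Set T)
    (hA : A ∈ ⋂ k : ℕ, ⋃ j : ℕ, ⋃ (_ : k ≤ j),
      {A' ∈ 𝒜 | ∃ s : T, J s ≠ 0 ∧ s ∈ L ∧
        (2 : ℝ) ^ (-(j : ℤ)) ≤ |J s| ∧ |J s| < (2 : ℝ) ^ (1 - (j : ℤ)) ∧
        qd 𝒜 d s A' < ENNReal.ofReal (|J s| ^ δ)}) :
    ∃ s : ℕ → T,
      (∀ k, J (s k) ≠ 0 ∧ s k ∈ L) ∧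
      Tendsto (fun k => qd 𝒜 d (s k) A) atTop (nhds 0) ∧
      Tendsto (fun k => |J (s k)|) atTop (nhds 0) ∧
      liminf (fun k => Real.log |J (s k)| /
        Real.log ((qd 𝒜 d (s k) A).toReal)) atTop ≤ 1 / δ := by

  simp only [Set.mem_iInter, Set.mem_iUnion, Set.mem_setOf_eq] at hA
  choose j hj hA𝒜 s hs0 hsL hlow hup hqd using hA
  have habs : ∀ k, |J (s k)| ≤ (2 : ℝ) ^ (1 - (k : ℤ)) := fun k =>
    (hup k).le.trans (zpow_le_zpow_right₀ one_le_two (by have := hj k; omega))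
  have hpow0 : Tendsto (fun k : ℕ => (2 : ℝ) ^ (1 - (k : ℤ))) atTop (nhds 0) := by
    have : (fun k : ℕ => (2 : ℝ) ^ (1 - (k : ℤ))) = fun k : ℕ => 2 * (1 / 2 : ℝ) ^ k := by
      funext k
      rw [zpow_sub₀ (by norm_num : (2:ℝ) ≠ 0)]
      simp [zpow_natCast]
      ring
    rw [this]
    simpa using (tendsto_pow_atTop_nhds_zero_of_lt_one (by norm_num) (by norm_num :
      (1/2:ℝ) < 1)).const_mul (2 : ℝ)
  have hJ0 : Tendsto (fun k => |J (s k)|) atTop (nhds 0) :=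
    squeeze_zero (fun k => abs_nonneg _) habs hpow0
  have habspos : ∀ k, 0 < |J (s k)| := fun k => abs_pos.2 (hs0 k)
  have hqd0 : Tendsto (fun k => qd 𝒜 d (s k) A) atTop (nhds 0) := by
    have h1 : Tendsto (fun k => |J (s k)| ^ δ) atTop (nhds 0) := by
      have := (Real.continuousAt_rpow_const 0 δ (Or.inr hδ.le)).tendsto.comp hJ0
      simpa [Real.zero_rpow hδ.ne', Function.comp_def] using this
    have h2 : Tendsto (fun k => ENNReal.ofReal (|J (s k)| ^ δ)) atTop (nhds 0) := by
      simpa [Function.comp_def] using (ENNReal.continuous_ofReal.tendsto 0).comp h1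
    exact tendsto_of_tendsto_of_tendsto_of_le_of_le tendsto_const_nhds h2
      (fun k => zero_le) (fun k => (hqd k).le)
  refine ⟨s, fun k => ⟨hs0 k, hsL k⟩, hqd0, hJ0, ?_⟩
  -- the liminf bound
  have hfin : ∀ k, (qd 𝒜 d (s k) A).toReal < |J (s k)| ^ δ := by
    intro k
    exact ENNReal.toReal_lt_of_lt_ofReal (hqd k)
  have key : ∀ k, 1 ≤ k → Real.log |J (s k)| /
      Real.log ((qd 𝒜 d (s k) A).toReal) ∈ Set.Icc (0:ℝ) (1/δ) := by
    intro k hk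
    have hJlt1 : |J (s k)| < 1 := by
      calc |J (s k)| < (2:ℝ) ^ (1 - (j k : ℤ)) := hup k
        _ ≤ (2:ℝ) ^ (0:ℤ) := zpow_le_zpow_right₀ one_le_two
            (by have := hj k; omega)
        _ = 1 := zpow_zero 2
    have hlogJ : Real.log |J (s k)| < 0 := Real.log_neg (habspos k) hJlt1
    rcases eq_or_lt_of_le (ENNReal.toReal_nonneg : 0 ≤ (qd 𝒜 d (s k) A).toReal) with h0 | hqpos
    · rw [← h0, Real.log_zero, div_zero]
      exact ⟨le_refl 0, by positivity⟩
    · have hlogq : Real.log ((qd 𝒜 d (s k) A).toReal) < δ * Real.log |J (s k)| := by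
        calc Real.log ((qd 𝒜 d (s k) A).toReal)
            < Real.log (|J (s k)| ^ δ) := Real.log_lt_log hqpos (hfin k)
          _ = δ * Real.log |J (s k)| := Real.log_rpow (habspos k) δ
      have hlogqneg : Real.log ((qd 𝒜 d (s k) A).toReal) < 0 := hlogq.trans_le (by nlinarith)
      constructor
      · exact div_nonneg_of_nonpos hlogJ.le hlogqneg.le
      · rw [div_le_iff_of_neg hlogqneg]
        calc (1/δ) * Real.log ((qd 𝒜 d (s k) A).toReal)
            ≤ (1/δ) * (δ * Real.log |J (s k)|) := by
              apply mul_le_mul_of_nonneg_left hlogq.le (by positivity)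
          _ = Real.log |J (s k)| := by field_simp
  have hbdd : IsBoundedUnder (· ≥ ·) atTop (fun k => Real.log |J (s k)| /
      Real.log ((qd 𝒜 d (s k) A).toReal)) :=
    ⟨0, eventually_atTop.2 ⟨1, fun k hk => (key k hk).1⟩⟩
  exact liminf_le_of_frequently_le
    ((eventually_atTop.2 ⟨1, fun k hk => (key k hk).2⟩).frequently) hbdd
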